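/- arXiv:1608.07885 — 4 statements merged into one kernel-verified Lean document; each statement's English description precedes it below -/
import Mathlib

section
/- Consider a 2×4 table of positive real cell probabilities with first row A, B, C, D and second row E, F, G, H. The following two sets of conditions are equivalent: (P1) AF = BE, CH = DG, and BG = CF; (P2) AF = BE, CH = DG, and (A+B)(G+H) = (E+F)(C+D). -/
/-- Proposition 1 of the paper: for a 2×4 table of positive cell probabilities
with first row A, B, C, D and second row E, F, G, H, the condition sets
P1 = {AF = BE, CH = DG, BG = CF} and
P2 = {AF = BE, CH = DG, (A+B)(G+H) = (E+F)(C+D)} are equivalent. -/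
theorem fes_2x4_condition_equivalence
    (A B C D E F G H : ℝ)
    (hA : 0 < A) (hB : 0 < B) (hC : 0 < C) (hD : 0 < D)
    (hE : 0 < E) (hF : 0 < F) (hG : 0 < G) (hH : 0 < H) :
    (A * F = B * E ∧ C * H = D * G ∧ B * G = C * F) ↔
    (A * F = B * E ∧ C * H = D * G ∧ (A + B) * (G + H) = (E + F) * (C + D)) := by
  constructor
  · rintro ⟨h1, h2, h3⟩
    refine ⟨h1, h2, ?_⟩
    have hAG : A * G = C * E := by
      apply mul_right_cancel₀ hF.ne'
      linear_combination G * h1 + E * h3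
    have hAH : A * H = D * E := by
      apply mul_right_cancel₀ (mul_pos hC hF).ne'
      linear_combination (C * H) * h1 + (B * E) * h2 + (D * E) * h3
    have hBH : B * H = D * F := by
      apply mul_right_cancel₀ hC.ne'
      linear_combination B * h2 + D * h3
    linear_combination hAG + hAH + h3 + hBH
  · rintro ⟨h1, h2, h3⟩
    refine ⟨h1, h2, ?_⟩
    have hpos : (0:ℝ) < (E + F) * (C + D) := by positivity
    apply mul_right_cancel₀ hpos.ne'
    linear_combination (C * F) * h3 - (C * G + C * H) * h1 - (B * (E + F)) * h2
end

section
/- Let F be a probability distribution on [0,1]² with all dyadic rectangle probabilities positive. For k1, k2 ≥ 1, F is (k1,k2)-independent if and only if θ(A) = 0 for every window A in the collection ⋃_{i ≤ k1-1, j ≤ k2-1} A^{i,j} of coarser-stratum windows, where θ(A) = log[F(A_{00})F(A_{11})/(F(A_{01})F(A_{10}))] is the log odds-ratio of the 2×2 subtable obtained by splitting A into its four dyadic quadrants A_{00}, A_{01}, A_{10}, A_{11}. -/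
open MeasureTheory

def dyadic (k l : ℕ) : Set ℝ := Set.Ico (((l : ℝ) - 1) / 2 ^ k) ((l : ℝ) / 2 ^ k)

lemma dyadic_split (i l : ℕ) (hl : 1 ≤ l) :
    dyadic i l = dyadic (i + 1) (2 * l - 1) ∪ dyadic (i + 1) (2 * l) := by
  have hc : ((2 * l - 1 : ℕ) : ℝ) = 2 * (l : ℝ) - 1 := by
    have h2 : (1:ℕ) ≤ 2 * l := by omega
    push_cast [h2]
    ring
  have ht : (0:ℝ) < 2 ^ i := by positivity
  unfold dyadic
  rw [hc]
  have e1 : (2 * (l:ℝ) - 1 - 1) / 2 ^ (i+1) = ((l:ℝ) - 1) / 2 ^ i := by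
    rw [pow_succ]; field_simp; ring
  have e2 : ((2:ℝ) * l) / 2 ^ (i+1) = (l:ℝ) / 2 ^ i := by
    rw [pow_succ]; field_simp
  push_cast
  rw [e1, e2, Set.Ico_union_Ico_eq_Ico]
  · have hl' : (1:ℝ) ≤ (l:ℝ) := by exact_mod_cast hl
    rw [div_le_div_iff₀ (by positivity) (by positivity), pow_succ]
    nlinarith
  · have hl' : (1:ℝ) ≤ (l:ℝ) := by exact_mod_cast hl
    rw [div_le_div_iff₀ (by positivity) (by positivity), pow_succ]
    nlinarith

lemma dyadic_disjoint_split (i l : ℕ) (hl : 1 ≤ l) :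
    Disjoint (dyadic (i + 1) (2 * l - 1)) (dyadic (i + 1) (2 * l)) := by
  have hc : ((2 * l - 1 : ℕ) : ℝ) = 2 * (l : ℝ) - 1 := by
    have h2 : (1:ℕ) ≤ 2 * l := by omega
    push_cast [h2]
    ring
  unfold dyadic
  rw [hc]
  push_cast
  exact Set.Ico_disjoint_Ico_same

lemma dyadic_measurable (k l : ℕ) : MeasurableSet (dyadic k l) := measurableSet_Ico

/-- The real-valued probability of a dyadic rectangle. -/
noncomputable def fR (F : Measure (ℝ × ℝ)) (i j l1 l2 : ℕ) : ℝ :=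
  (F (dyadic i l1 ×ˢ dyadic j l2)).toReal

lemma fR_split1 (F : Measure (ℝ × ℝ)) [IsProbabilityMeasure F] (i j l1 l2 : ℕ) (h : 1 ≤ l1) :
    fR F i j l1 l2 = fR F (i+1) j (2*l1-1) l2 + fR F (i+1) j (2*l1) l2 := by
  unfold fR
  rw [dyadic_split i l1 h, Set.union_prod,
    measure_union (Set.disjoint_prod.mpr (Or.inl (dyadic_disjoint_split i l1 h)))
      ((dyadic_measurable _ _).prod (dyadic_measurable _ _)),
    ENNReal.toReal_add (measure_ne_top F _) (measure_ne_top F _)]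

lemma fR_split2 (F : Measure (ℝ × ℝ)) [IsProbabilityMeasure F] (i j l1 l2 : ℕ) (h : 1 ≤ l2) :
    fR F i j l1 l2 = fR F i (j+1) l1 (2*l2-1) + fR F i (j+1) l1 (2*l2) := by
  unfold fR
  rw [dyadic_split j l2 h, Set.prod_union,
    measure_union (Set.disjoint_prod.mpr (Or.inr (dyadic_disjoint_split j l2 h)))
      ((dyadic_measurable _ _).prod (dyadic_measurable _ _)),
    ENNReal.toReal_add (measure_ne_top F _) (measure_ne_top F _)]

/-- Theorem 2 of the paper: for F a probability distribution on [0,1]² with all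
dyadic rectangle probabilities positive and k1, k2 ≥ 1, F is
(k1,k2)-independent if and only if the log odds-ratio θ(A) vanishes for every
window A = I^i_{l1}×I^j_{l2} with i ≤ k1-1 and j ≤ k2-1, where θ(A) is the log
odds-ratio of the 2×2 table of the four dyadic quadrants of A. -/
theorem k1k2_independence_iff_all_coarser_log_odds_ratios_zero
    (F : Measure (ℝ × ℝ)) [IsProbabilityMeasure F]
    (hF : F (dyadic 0 1 ×ˢ dyadic 0 1) = 1)
    (hpos : ∀ i j l1 l2, l1 ∈ Finset.Icc 1 (2 ^ i) → l2 ∈ Finset.Icc 1 (2 ^ j) →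
      0 < F (dyadic i l1 ×ˢ dyadic j l2))
    (k1 k2 : ℕ) (hk1 : 1 ≤ k1) (hk2 : 1 ≤ k2) :
    (∀ l1 ∈ Finset.Icc 1 (2 ^ k1), ∀ l2 ∈ Finset.Icc 1 (2 ^ k2),
      F (dyadic k1 l1 ×ˢ dyadic k2 l2) =
        F (dyadic k1 l1 ×ˢ dyadic 0 1) * F (dyadic 0 1 ×ˢ dyadic k2 l2)) ↔
    (∀ i < k1, ∀ j < k2, ∀ l1 ∈ Finset.Icc 1 (2 ^ i), ∀ l2 ∈ Finset.Icc 1 (2 ^ j),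
      Real.log
        ((F (dyadic (i + 1) (2 * l1 - 1) ×ˢ dyadic (j + 1) (2 * l2 - 1))).toReal *
          (F (dyadic (i + 1) (2 * l1) ×ˢ dyadic (j + 1) (2 * l2))).toReal /
        ((F (dyadic (i + 1) (2 * l1 - 1) ×ˢ dyadic (j + 1) (2 * l2))).toReal *
          (F (dyadic (i + 1) (2 * l1) ×ˢ dyadic (j + 1) (2 * l2 - 1))).toReal)) = 0) := by
  classical
  -- abbreviations
  have hfin : ∀ i j l1 l2 : ℕ, F (dyadic i l1 ×ˢ dyadic j l2) ≠ ⊤ :=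
    fun _ _ _ _ => measure_ne_top F _
  have fpos : ∀ i j l1 l2 : ℕ, 1 ≤ l1 → l1 ≤ 2 ^ i → 1 ≤ l2 → l2 ≤ 2 ^ j →
      0 < fR F i j l1 l2 := by
    intro i j l1 l2 h1 h2 h3 h4
    exact ENNReal.toReal_pos
      (hpos i j l1 l2 (Finset.mem_Icc.mpr ⟨h1, h2⟩) (Finset.mem_Icc.mpr ⟨h3, h4⟩)).ne'
      (hfin _ _ _ _)
  have fone : fR F 0 0 1 1 = 1 := by
    unfold fR; rw [hF]; simp
  -- the independence predicate on levels
  let Ind : ℕ → ℕ → Prop := fun a b =>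
    ∀ l1, 1 ≤ l1 → l1 ≤ 2 ^ a → ∀ l2, 1 ≤ l2 → l2 ≤ 2 ^ b →
      fR F a b l1 l2 = fR F a 0 l1 1 * fR F 0 b 1 l2
  -- descending in the first coordinate
  have mono1 : ∀ a b, Ind (a+1) b → Ind a b := by
    intro a b h l1 h1 h2 l2 h3 h4
    have hp : (2:ℕ) ^ (a+1) = 2 * 2 ^ a := by ring
    rw [fR_split1 F a b l1 l2 h1, fR_split1 F a 0 l1 1 h1,
      h (2*l1-1) (by omega) (by omega) l2 h3 h4,
      h (2*l1) (by omega) (by omega) l2 h3 h4, add_mul]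
  have mono2 : ∀ a b, Ind a (b+1) → Ind a b := by
    intro a b h l1 h1 h2 l2 h3 h4
    have hp : (2:ℕ) ^ (b+1) = 2 * 2 ^ b := by ring
    rw [fR_split2 F a b l1 l2 h3, fR_split2 F 0 b 1 l2 h3,
      h l1 h1 h2 (2*l2-1) (by omega) (by omega),
      h l1 h1 h2 (2*l2) (by omega) (by omega), mul_add]
  have desc1 : ∀ m b, Ind m b → ∀ a, a ≤ m → Ind a b := by
    intro m
    induction m with
    | zero =>
      intro b h a ha
      obtain rfl : a = 0 := Nat.le_zero.mp ha
      exact h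
    | succ n ih =>
      intro b h a ha
      rcases Nat.eq_or_lt_of_le ha with rfl | hlt
      · exact h
      · exact ih b (mono1 n b h) a (by omega)
  have desc2 : ∀ m a, Ind a m → ∀ b, b ≤ m → Ind a b := by
    intro m
    induction m with
    | zero =>
      intro a h b hb
      obtain rfl : b = 0 := Nat.le_zero.mp hb
      exact h
    | succ n ih =>
      intro a h b hb
      rcases Nat.eq_or_lt_of_le hb with rfl | hlt
      · exact h
      · exact ih a (mono2 a n h) b (by omega)
  constructor
  · -- independence ⟹ log odds ratios vanish
    intro hInd i hi j hj l1 hl1 l2 hl2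
    rw [Finset.mem_Icc] at hl1 hl2
    have hIk : Ind k1 k2 := by
      intro m1 h1 h2 m2 h3 h4
      have := hInd m1 (Finset.mem_Icc.mpr ⟨h1, h2⟩) m2 (Finset.mem_Icc.mpr ⟨h3, h4⟩)
      unfold fR
      rw [this, ENNReal.toReal_mul]
    have hI : Ind (i+1) (j+1) := desc2 k2 (i+1) (desc1 k1 k2 hIk (i+1) hi) (j+1) hj
    have hp1 : (2:ℕ) ^ (i+1) = 2 * 2 ^ i := by ring
    have hp2 : (2:ℕ) ^ (j+1) = 2 * 2 ^ j := by ring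
    have h00 := hI (2*l1-1) (by omega) (by omega) (2*l2-1) (by omega) (by omega)
    have h01 := hI (2*l1-1) (by omega) (by omega) (2*l2) (by omega) (by omega)
    have h10 := hI (2*l1) (by omega) (by omega) (2*l2-1) (by omega) (by omega)
    have h11 := hI (2*l1) (by omega) (by omega) (2*l2) (by omega) (by omega)
    have hx0 : 0 < fR F (i+1) 0 (2*l1-1) 1 := fpos _ _ _ _ (by omega) (by omega) le_rfl le_rfl
    have hx1 : 0 < fR F (i+1) 0 (2*l1) 1 := fpos _ _ _ _ (by omega) (by omega) le_rfl le_rfl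
    have hy0 : 0 < fR F 0 (j+1) 1 (2*l2-1) := fpos _ _ _ _ le_rfl le_rfl (by omega) (by omega)
    have hy1 : 0 < fR F 0 (j+1) 1 (2*l2) := fpos _ _ _ _ le_rfl le_rfl (by omega) (by omega)
    show Real.log (fR F (i+1) (j+1) (2*l1-1) (2*l2-1) * fR F (i+1) (j+1) (2*l1) (2*l2) /
      (fR F (i+1) (j+1) (2*l1-1) (2*l2) * fR F (i+1) (j+1) (2*l1) (2*l2-1))) = 0
    rw [h00, h01, h10, h11]
    have : fR F (i+1) 0 (2*l1-1) 1 * fR F 0 (j+1) 1 (2*l2-1) *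
        (fR F (i+1) 0 (2*l1) 1 * fR F 0 (j+1) 1 (2*l2)) /
        (fR F (i+1) 0 (2*l1-1) 1 * fR F 0 (j+1) 1 (2*l2) *
        (fR F (i+1) 0 (2*l1) 1 * fR F 0 (j+1) 1 (2*l2-1))) = 1 := by
      field_simp
    rw [this, Real.log_one]
  · -- log odds ratios vanish ⟹ independence
    intro hθ
    -- cross-product equalities
    have hOR : ∀ i, i < k1 → ∀ j, j < k2 → ∀ m1, 1 ≤ m1 → m1 ≤ 2^i → ∀ m2, 1 ≤ m2 → m2 ≤ 2^j →
        fR F (i+1) (j+1) (2*m1-1) (2*m2-1) * fR F (i+1) (j+1) (2*m1) (2*m2)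
          = fR F (i+1) (j+1) (2*m1-1) (2*m2) * fR F (i+1) (j+1) (2*m1) (2*m2-1) := by
      intro i hi j hj m1 h1 h2 m2 h3 h4
      have hlog := hθ i hi j hj m1 (Finset.mem_Icc.mpr ⟨h1, h2⟩) m2 (Finset.mem_Icc.mpr ⟨h3, h4⟩)
      have hp1 : (2:ℕ) ^ (i+1) = 2 * 2 ^ i := by ring
      have hp2 : (2:ℕ) ^ (j+1) = 2 * 2 ^ j := by ring
      have p00 : 0 < fR F (i+1) (j+1) (2*m1-1) (2*m2-1) :=
        fpos _ _ _ _ (by omega) (by omega) (by omega) (by omega)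
      have p01 : 0 < fR F (i+1) (j+1) (2*m1-1) (2*m2) :=
        fpos _ _ _ _ (by omega) (by omega) (by omega) (by omega)
      have p10 : 0 < fR F (i+1) (j+1) (2*m1) (2*m2-1) :=
        fpos _ _ _ _ (by omega) (by omega) (by omega) (by omega)
      have p11 : 0 < fR F (i+1) (j+1) (2*m1) (2*m2) :=
        fpos _ _ _ _ (by omega) (by omega) (by omega) (by omega)
      have hlog' : Real.log (fR F (i+1) (j+1) (2*m1-1) (2*m2-1) * fR F (i+1) (j+1) (2*m1) (2*m2) /
          (fR F (i+1) (j+1) (2*m1-1) (2*m2) * fR F (i+1) (j+1) (2*m1) (2*m2-1))) = 0 := hlog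
      rcases Real.log_eq_zero.mp hlog' with h | h | h
      · exfalso
        have : 0 < fR F (i+1) (j+1) (2*m1-1) (2*m2-1) * fR F (i+1) (j+1) (2*m1) (2*m2) /
            (fR F (i+1) (j+1) (2*m1-1) (2*m2) * fR F (i+1) (j+1) (2*m1) (2*m2-1)) := by positivity
        linarith
      · exact (div_eq_one_iff_eq (by positivity)).mp h
      · exfalso
        have : 0 < fR F (i+1) (j+1) (2*m1-1) (2*m2-1) * fR F (i+1) (j+1) (2*m1) (2*m2) /
            (fR F (i+1) (j+1) (2*m1-1) (2*m2) * fR F (i+1) (j+1) (2*m1) (2*m2-1)) := by positivity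
        linarith
    -- main induction: independence at all levels (a, b) with a ≤ k1, b ≤ k2
    have main : ∀ n a b, a + b ≤ n → a ≤ k1 → b ≤ k2 → Ind a b := by
      intro n
      induction n with
      | zero =>
        intro a b hab ha hb
        obtain rfl : a = 0 := by omega
        obtain rfl : b = 0 := by omega
        intro l1 h1 h2 l2 h3 h4
        norm_num at h2 h4
        obtain rfl : l1 = 1 := by omega
        obtain rfl : l2 = 1 := by omega
        rw [fone]; ring
      | succ n ih =>
        intro a b hab ha hb
        match a, b with
        | 0, b =>
          intro l1 h1 h2 l2 h3 h4
          norm_num at h2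
          obtain rfl : l1 = 1 := by omega
          rw [fone, one_mul]
        | a'+1, 0 =>
          intro l1 h1 h2 l2 h3 h4
          norm_num at h4
          obtain rfl : l2 = 1 := by omega
          rw [fone, mul_one]
        | a'+1, b'+1 =>
          have IH1 : Ind a' (b'+1) := ih a' (b'+1) (by omega) (by omega) hb
          have IH2 : Ind (a'+1) b' := ih (a'+1) b' (by omega) ha (by omega)
          intro l1 h1 h2 l2 h3 h4
          have hp1 : (2:ℕ) ^ (a'+1) = 2 * 2 ^ a' := by ring
          have hp2 : (2:ℕ) ^ (b'+1) = 2 * 2 ^ b' := by ring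
          obtain ⟨m1, hm11, hm12, hm13⟩ :
              ∃ m, 1 ≤ m ∧ m ≤ 2^a' ∧ (l1 = 2*m-1 ∨ l1 = 2*m) :=
            ⟨(l1+1)/2, by omega, by omega, by omega⟩
          obtain ⟨m2, hm21, hm22, hm23⟩ :
              ∃ m, 1 ≤ m ∧ m ≤ 2^b' ∧ (l2 = 2*m-1 ∨ l2 = 2*m) :=
            ⟨(l2+1)/2, by omega, by omega, by omega⟩
          set a := a'+1
          set b := b'+1
          set q00 := fR F a b (2*m1-1) (2*m2-1) with hq00d
          set q01 := fR F a b (2*m1-1) (2*m2) with hq01d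
          set q10 := fR F a b (2*m1) (2*m2-1) with hq10d
          set q11 := fR F a b (2*m1) (2*m2) with hq11d
          set x0 := fR F a 0 (2*m1-1) 1 with hx0d
          set x1 := fR F a 0 (2*m1) 1 with hx1d
          set y0 := fR F 0 b 1 (2*m2-1) with hy0d
          set y1 := fR F 0 b 1 (2*m2) with hy1d
          have hO : q00 * q11 = q01 * q10 :=
            hOR a' (by omega) b' (by omega) m1 hm11 hm12 m2 hm21 hm22
          have hY : fR F 0 b' 1 m2 = y0 + y1 := fR_split2 F 0 b' 1 m2 hm21
          have hX : fR F a' 0 m1 1 = x0 + x1 := fR_split1 F a' 0 m1 1 hm11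
          have e1 : q00 + q01 = x0 * (y0 + y1) := by
            rw [← hY, ← fR_split2 F a b' (2*m1-1) m2 hm21]
            exact IH2 (2*m1-1) (by omega) (by omega) m2 hm21 hm22
          have e2 : q10 + q11 = x1 * (y0 + y1) := by
            rw [← hY, ← fR_split2 F a b' (2*m1) m2 hm21]
            exact IH2 (2*m1) (by omega) (by omega) m2 hm21 hm22
          have e3 : q00 + q10 = (x0 + x1) * y0 := by
            rw [← hX, ← fR_split1 F a' b m1 (2*m2-1) hm11]
            exact IH1 m1 hm11 hm12 (2*m2-1) (by omega) (by omega)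
          have px0 : 0 < x0 := fpos _ _ _ _ (by omega) (by omega) le_rfl le_rfl
          have px1 : 0 < x1 := fpos _ _ _ _ (by omega) (by omega) le_rfl le_rfl
          have py0 : 0 < y0 := fpos _ _ _ _ le_rfl le_rfl (by omega) (by omega)
          have py1 : 0 < y1 := fpos _ _ _ _ le_rfl le_rfl (by omega) (by omega)
          have key : (q00 - x0*y0) * ((x0+x1)*(y0+y1)) = 0 := by
            linear_combination hO - q00 * e2 + (x0*(y0+y1)) * e3 + q10 * e1
          have hc00 : q00 = x0 * y0 := by
            have hne : (x0+x1)*(y0+y1) ≠ 0 := by positivity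
            have := mul_eq_zero.mp key
            rcases this with h | h
            · linarith [sub_eq_zero.mp h]
            · exact absurd h hne
          have hc01 : q01 = x0 * y1 := by linear_combination e1 - hc00
          have hc10 : q10 = x1 * y0 := by linear_combination e3 - hc00
          have hc11 : q11 = x1 * y1 := by linear_combination e2 - hc10
          rcases hm13 with rfl | rfl <;> rcases hm23 with rfl | rfl
          · exact hc00
          · exact hc01
          · exact hc10
          · exact hc11
    intro l1 hl1 l2 hl2
    rw [Finset.mem_Icc] at hl1 hl2
    have := main (k1 + k2) k1 k2 le_rfl le_rfl le_rfl l1 hl1.1 hl1.2 l2 hl2.1 hl2.2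
    unfold fR at this
    rw [← ENNReal.toReal_mul] at this
    exact (ENNReal.toReal_eq_toReal_iff' (hfin _ _ _ _)
      (ENNReal.mul_ne_top (hfin _ _ _ _) (hfin _ _ _ _))).mp this
end

section
/- Let n_{k1,k2} be a 2^{k1}×2^{k2} contingency table arising from multinomial sampling under independence of the two marginal variables. Then the multivariate hypergeometric likelihood of the full table given its row and column totals factorizes as the product over all windows A ∈ ⋃_{i ≤ k1-1, j ≤ k2-1} A^{i,j} of the univariate hypergeometric probabilities of the 2×2 subtables: P(n_{k1,k2} | row totals, column totals) = ∏_A P(n(A_{00}) | n(A_{0·}), n(A_{·0}), n(A)). -/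
/-- The hypergeometric pmf HG(a,b,c) at x. -/
noncomputable def hgPmf (a b c x : ℕ) : ℝ :=
  (a.choose x * (c - a).choose (b - x) : ℝ) / (c.choose b : ℝ)

/-- The count of a dyadic window: for a 2^k1 × 2^k2 table `n` (0-indexed), the
total count over the level-(i,j) window with indices (l1,l2), i.e., the block of
rows [l1·2^(k1-i), (l1+1)·2^(k1-i)) and columns [l2·2^(k2-j), (l2+1)·2^(k2-j)). -/
def windowCount (k1 k2 : ℕ) (n : ℕ → ℕ → ℕ) (i l1 j l2 : ℕ) : ℕ :=
  ∑ a ∈ Finset.Ico (l1 * 2 ^ (k1 - i)) ((l1 + 1) * 2 ^ (k1 - i)),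
    ∑ b ∈ Finset.Ico (l2 * 2 ^ (k2 - j)) ((l2 + 1) * 2 ^ (k2 - j)), n a b

lemma wc_row_split (k1 k2 : ℕ) (n : ℕ → ℕ → ℕ) {i : ℕ} (hi : i < k1) (l1 j l2 : ℕ) :
    windowCount k1 k2 n i l1 j l2 =
      windowCount k1 k2 n (i + 1) (2 * l1) j l2 +
        windowCount k1 k2 n (i + 1) (2 * l1 + 1) j l2 := by
  unfold windowCount
  have hk : k1 - i = (k1 - (i + 1)) + 1 := by omega
  set m := 2 ^ (k1 - (i + 1)) with hm
  have h2 : 2 ^ (k1 - i) = m * 2 := by rw [hk, pow_succ]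
  have e1 : l1 * 2 ^ (k1 - i) = (2 * l1) * m := by rw [h2]; ring
  have e2 : (l1 + 1) * 2 ^ (k1 - i) = (2 * l1 + 1 + 1) * m := by rw [h2]; ring
  rw [e1, e2,
    ← Finset.sum_Ico_consecutive _
      (Nat.mul_le_mul_right m (by omega : 2 * l1 ≤ 2 * l1 + 1))
      (Nat.mul_le_mul_right m (by omega : 2 * l1 + 1 ≤ 2 * l1 + 1 + 1))]

lemma wc_col_split (k1 k2 : ℕ) (n : ℕ → ℕ → ℕ) {j : ℕ} (hj : j < k2) (i l1 l2 : ℕ) :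
    windowCount k1 k2 n i l1 j l2 =
      windowCount k1 k2 n i l1 (j + 1) (2 * l2) +
        windowCount k1 k2 n i l1 (j + 1) (2 * l2 + 1) := by
  unfold windowCount
  rw [← Finset.sum_add_distrib]
  refine Finset.sum_congr rfl fun a _ => ?_
  have hk : k2 - j = (k2 - (j + 1)) + 1 := by omega
  set m := 2 ^ (k2 - (j + 1)) with hm
  have h2 : 2 ^ (k2 - j) = m * 2 := by rw [hk, pow_succ]
  have e1 : l2 * 2 ^ (k2 - j) = (2 * l2) * m := by rw [h2]; ring
  have e2 : (l2 + 1) * 2 ^ (k2 - j) = (2 * l2 + 1 + 1) * m := by rw [h2]; ring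
  rw [e1, e2,
    ← Finset.sum_Ico_consecutive _
      (Nat.mul_le_mul_right m (by omega : 2 * l2 ≤ 2 * l2 + 1))
      (Nat.mul_le_mul_right m (by omega : 2 * l2 + 1 ≤ 2 * l2 + 1 + 1))]

lemma prod_range_double {M : Type*} [CommMonoid M] (f : ℕ → M) (n : ℕ) :
    ∏ l ∈ Finset.range (2 * n), f l = ∏ l ∈ Finset.range n, (f (2 * l) * f (2 * l + 1)) := by
  induction n with
  | zero => simp
  | succ m ih =>
      have h : 2 * (m + 1) = (2 * m + 1) + 1 := by ring
      rw [h, Finset.prod_range_succ, Finset.prod_range_succ, ih, Finset.prod_range_succ,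
        mul_assoc]

lemma hg_fact (x p q r : ℕ) :
    hgPmf (x + p) (x + q) (x + p + q + r) x =
      ((x + p).factorial * (q + r).factorial * (x + q).factorial * (p + r).factorial : ℝ) /
        ((x + p + q + r).factorial *
          (x.factorial * p.factorial * q.factorial * r.factorial)) := by
  unfold hgPmf
  have h1 : x + p + q + r - (x + p) = q + r := by omega
  have h2 : x + q - x = q := by omega
  rw [h1, h2, Nat.cast_choose ℝ (by omega : x ≤ x + p),
      Nat.cast_choose ℝ (by omega : q ≤ q + r),
      Nat.cast_choose ℝ (by omega : x + q ≤ x + p + q + r)]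
  have h3 : x + p - x = p := by omega
  have h4 : q + r - q = r := by omega
  have h5 : x + p + q + r - (x + q) = p + r := by omega
  rw [h3, h4, h5]
  have f1 := Nat.factorial_pos x
  have f2 := Nat.factorial_pos p
  have f3 := Nat.factorial_pos q
  have f4 := Nat.factorial_pos r
  have f5 := Nat.factorial_pos (x + q)
  have f6 := Nat.factorial_pos (p + r)
  have f7 := Nat.factorial_pos (x + p + q + r)
  field_simp

lemma level_prod (k1 k2 : ℕ) (n : ℕ → ℕ → ℕ) {i j : ℕ} (hi : i < k1) (hj : j < k2) :
    ∏ l1 ∈ Finset.range (2 ^ i), ∏ l2 ∈ Finset.range (2 ^ j),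
        hgPmf (windowCount k1 k2 n (i + 1) (2 * l1) j l2)
          (windowCount k1 k2 n i l1 (j + 1) (2 * l2))
          (windowCount k1 k2 n i l1 j l2)
          (windowCount k1 k2 n (i + 1) (2 * l1) (j + 1) (2 * l2)) =
      ((∏ l1 ∈ Finset.range (2 ^ (i + 1)), ∏ l2 ∈ Finset.range (2 ^ j),
          ((windowCount k1 k2 n (i + 1) l1 j l2).factorial : ℝ)) *
        (∏ l1 ∈ Finset.range (2 ^ i), ∏ l2 ∈ Finset.range (2 ^ (j + 1)),
          ((windowCount k1 k2 n i l1 (j + 1) l2).factorial : ℝ))) /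
      ((∏ l1 ∈ Finset.range (2 ^ i), ∏ l2 ∈ Finset.range (2 ^ j),
          ((windowCount k1 k2 n i l1 j l2).factorial : ℝ)) *
        (∏ l1 ∈ Finset.range (2 ^ (i + 1)), ∏ l2 ∈ Finset.range (2 ^ (j + 1)),
          ((windowCount k1 k2 n (i + 1) l1 (j + 1) l2).factorial : ℝ))) := by
  set A : ℕ → ℕ → ℝ := fun l1 l2 => ((windowCount k1 k2 n (i + 1) l1 j l2).factorial : ℝ) with hA
  set B : ℕ → ℕ → ℝ := fun l1 l2 => ((windowCount k1 k2 n i l1 (j + 1) l2).factorial : ℝ) with hB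
  set C : ℕ → ℕ → ℝ := fun l1 l2 => ((windowCount k1 k2 n i l1 j l2).factorial : ℝ) with hC
  set D : ℕ → ℕ → ℝ := fun l1 l2 => ((windowCount k1 k2 n (i + 1) l1 (j + 1) l2).factorial : ℝ) with hD
  have key : ∀ l1 l2,
      hgPmf (windowCount k1 k2 n (i + 1) (2 * l1) j l2)
        (windowCount k1 k2 n i l1 (j + 1) (2 * l2))
        (windowCount k1 k2 n i l1 j l2)
        (windowCount k1 k2 n (i + 1) (2 * l1) (j + 1) (2 * l2)) =
      (A (2 * l1) l2 * A (2 * l1 + 1) l2) * (B l1 (2 * l2) * B l1 (2 * l2 + 1)) /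
        (C l1 l2 * ((D (2 * l1) (2 * l2) * D (2 * l1) (2 * l2 + 1)) *
          (D (2 * l1 + 1) (2 * l2) * D (2 * l1 + 1) (2 * l2 + 1)))) := by
    intro l1 l2
    set x := windowCount k1 k2 n (i + 1) (2 * l1) (j + 1) (2 * l2) with hx
    set p := windowCount k1 k2 n (i + 1) (2 * l1) (j + 1) (2 * l2 + 1) with hp
    set q := windowCount k1 k2 n (i + 1) (2 * l1 + 1) (j + 1) (2 * l2) with hq
    set r := windowCount k1 k2 n (i + 1) (2 * l1 + 1) (j + 1) (2 * l2 + 1) with hr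
    have ha : windowCount k1 k2 n (i + 1) (2 * l1) j l2 = x + p :=
      wc_col_split k1 k2 n hj (i + 1) (2 * l1) l2
    have ha' : windowCount k1 k2 n (i + 1) (2 * l1 + 1) j l2 = q + r :=
      wc_col_split k1 k2 n hj (i + 1) (2 * l1 + 1) l2
    have hb : windowCount k1 k2 n i l1 (j + 1) (2 * l2) = x + q :=
      wc_row_split k1 k2 n hi l1 (j + 1) (2 * l2)
    have hb' : windowCount k1 k2 n i l1 (j + 1) (2 * l2 + 1) = p + r :=
      wc_row_split k1 k2 n hi l1 (j + 1) (2 * l2 + 1)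
    have hc : windowCount k1 k2 n i l1 j l2 = x + p + q + r := by
      rw [wc_row_split k1 k2 n hi l1 j l2, ha, ha']; omega
    simp only [hA, hB, hC, hD]
    rw [ha, hb, hc, ha', hb', hg_fact]
    ring
  rw [Finset.prod_congr rfl fun l1 _ => Finset.prod_congr rfl fun l2 _ => key l1 l2]
  have h2i : (2 : ℕ) ^ (i + 1) = 2 * 2 ^ i := by rw [pow_succ, mul_comm]
  have h2j : (2 : ℕ) ^ (j + 1) = 2 * 2 ^ j := by rw [pow_succ, mul_comm]
  have hAeq : ∏ l1 ∈ Finset.range (2 ^ i), ∏ l2 ∈ Finset.range (2 ^ j),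
      (A (2 * l1) l2 * A (2 * l1 + 1) l2) =
      ∏ l1 ∈ Finset.range (2 ^ (i + 1)), ∏ l2 ∈ Finset.range (2 ^ j), A l1 l2 := by
    rw [h2i, prod_range_double (fun l1 => ∏ l2 ∈ Finset.range (2 ^ j), A l1 l2) (2 ^ i)]
    exact Finset.prod_congr rfl fun l1 _ => Finset.prod_mul_distrib
  have hBeq : ∏ l1 ∈ Finset.range (2 ^ i), ∏ l2 ∈ Finset.range (2 ^ j),
      (B l1 (2 * l2) * B l1 (2 * l2 + 1)) =
      ∏ l1 ∈ Finset.range (2 ^ i), ∏ l2 ∈ Finset.range (2 ^ (j + 1)), B l1 l2 := by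
    refine Finset.prod_congr rfl fun l1 _ => ?_
    rw [h2j, prod_range_double (fun l2 => B l1 l2) (2 ^ j)]
  have hDeq : ∏ l1 ∈ Finset.range (2 ^ i), ∏ l2 ∈ Finset.range (2 ^ j),
      ((D (2 * l1) (2 * l2) * D (2 * l1) (2 * l2 + 1)) *
        (D (2 * l1 + 1) (2 * l2) * D (2 * l1 + 1) (2 * l2 + 1))) =
      ∏ l1 ∈ Finset.range (2 ^ (i + 1)), ∏ l2 ∈ Finset.range (2 ^ (j + 1)), D l1 l2 := by
    rw [h2i, prod_range_double (fun l1 => ∏ l2 ∈ Finset.range (2 ^ (j + 1)), D l1 l2) (2 ^ i)]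
    refine Finset.prod_congr rfl fun l1 _ => ?_
    rw [Finset.prod_mul_distrib, h2j,
      prod_range_double (fun l2 => D (2 * l1) l2) (2 ^ j),
      prod_range_double (fun l2 => D (2 * l1 + 1) l2) (2 ^ j)]
  calc ∏ l1 ∈ Finset.range (2 ^ i), ∏ l2 ∈ Finset.range (2 ^ j),
        ((A (2 * l1) l2 * A (2 * l1 + 1) l2) * (B l1 (2 * l2) * B l1 (2 * l2 + 1)) /
          (C l1 l2 * ((D (2 * l1) (2 * l2) * D (2 * l1) (2 * l2 + 1)) *
            (D (2 * l1 + 1) (2 * l2) * D (2 * l1 + 1) (2 * l2 + 1)))))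
      = ((∏ l1 ∈ Finset.range (2 ^ i), ∏ l2 ∈ Finset.range (2 ^ j),
            (A (2 * l1) l2 * A (2 * l1 + 1) l2)) *
          (∏ l1 ∈ Finset.range (2 ^ i), ∏ l2 ∈ Finset.range (2 ^ j),
            (B l1 (2 * l2) * B l1 (2 * l2 + 1)))) /
        ((∏ l1 ∈ Finset.range (2 ^ i), ∏ l2 ∈ Finset.range (2 ^ j), C l1 l2) *
          (∏ l1 ∈ Finset.range (2 ^ i), ∏ l2 ∈ Finset.range (2 ^ j),
            ((D (2 * l1) (2 * l2) * D (2 * l1) (2 * l2 + 1)) *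
              (D (2 * l1 + 1) (2 * l2) * D (2 * l1 + 1) (2 * l2 + 1))))) := by
        simp only [Finset.prod_div_distrib, Finset.prod_mul_distrib]
    _ = _ := by rw [hAeq, hBeq, hDeq]

lemma tele1 (g h : ℕ → ℝ) (hg : ∀ i, g i ≠ 0) (hh : ∀ i, h i ≠ 0) (m : ℕ) :
    ∏ j ∈ Finset.range m, (g j * h (j + 1)) / (g (j + 1) * h j) =
      (g 0 * h m) / (g m * h 0) := by
  induction m with
  | zero => simp [div_self (mul_ne_zero (hg 0) (hh 0))]
  | succ m ih =>
      rw [Finset.prod_range_succ, ih, div_mul_div_comm,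
        div_eq_div_iff
          (mul_ne_zero (mul_ne_zero (hg m) (hh 0)) (mul_ne_zero (hg (m+1)) (hh m)))
          (mul_ne_zero (hg (m+1)) (hh 0))]
      ring

lemma tele2 (F : ℕ → ℕ → ℝ) (hF : ∀ i j, F i j ≠ 0) (k1 k2 : ℕ) :
    ∏ i ∈ Finset.range k1, ∏ j ∈ Finset.range k2,
        (F (i + 1) j * F i (j + 1)) / (F i j * F (i + 1) (j + 1)) =
      (F k1 0 * F 0 k2) / (F 0 0 * F k1 k2) := by
  have inner : ∀ i, ∏ j ∈ Finset.range k2,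
      (F (i + 1) j * F i (j + 1)) / (F i j * F (i + 1) (j + 1)) =
      (F (i + 1) 0 * F i k2) / (F (i + 1) k2 * F i 0) := by
    intro i
    have := tele1 (fun j => F (i + 1) j) (fun j => F i j) (fun j => hF _ _) (fun j => hF _ _) k2
    simpa [mul_comm, mul_left_comm] using this
  rw [Finset.prod_congr rfl (fun i _ => inner i)]
  have := tele1 (fun i => F i k2) (fun i => F i 0) (fun i => hF _ _) (fun i => hF _ _) k1
  calc ∏ i ∈ Finset.range k1, (F (i + 1) 0 * F i k2) / (F (i + 1) k2 * F i 0)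
      = ∏ i ∈ Finset.range k1, (F i k2 * F (i + 1) 0) / (F (i + 1) k2 * F i 0) := by
        refine Finset.prod_congr rfl fun i _ => by ring
    _ = (F 0 k2 * F k1 0) / (F k1 k2 * F 0 0) := this
    _ = (F k1 0 * F 0 k2) / (F 0 0 * F k1 k2) := by ring


set_option maxRecDepth 8000 in
/-- Multi-scale factorization of the multivariate hypergeometric likelihood:
the MHG pmf of a 2^k1 × 2^k2 contingency table given its row and column totals
equals the product, over all dyadic windows A in the strata A^{i,j} with
i ≤ k1-1, j ≤ k2-1, of the univariate hypergeometric probabilities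
P(n(A₀₀) | n(A₀·), n(A·₀), n(A)) of the associated 2×2 subtables. -/
theorem MHG_likelihood_factorization
    (k1 k2 : ℕ) (n : ℕ → ℕ → ℕ) :
    ((∏ i ∈ Finset.range (2 ^ k1), ((∑ j ∈ Finset.range (2 ^ k2), n i j).factorial : ℝ)) *
        ∏ j ∈ Finset.range (2 ^ k2), ((∑ i ∈ Finset.range (2 ^ k1), n i j).factorial : ℝ)) /
      (((∑ i ∈ Finset.range (2 ^ k1), ∑ j ∈ Finset.range (2 ^ k2), n i j).factorial : ℝ) *
        ∏ i ∈ Finset.range (2 ^ k1), ∏ j ∈ Finset.range (2 ^ k2), ((n i j).factorial : ℝ)) =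
    ∏ i ∈ Finset.range k1, ∏ j ∈ Finset.range k2,
      ∏ l1 ∈ Finset.range (2 ^ i), ∏ l2 ∈ Finset.range (2 ^ j),
        hgPmf (windowCount k1 k2 n (i + 1) (2 * l1) j l2)
          (windowCount k1 k2 n i l1 (j + 1) (2 * l2))
          (windowCount k1 k2 n i l1 j l2)
          (windowCount k1 k2 n (i + 1) (2 * l1) (j + 1) (2 * l2)) := by
  set F : ℕ → ℕ → ℝ := fun i j =>
    ∏ l1 ∈ Finset.range (2 ^ i), ∏ l2 ∈ Finset.range (2 ^ j),
      ((windowCount k1 k2 n i l1 j l2).factorial : ℝ) with hF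
  have hFne : ∀ i j, F i j ≠ 0 := by
    intro i j
    refine Finset.prod_ne_zero_iff.2 fun l1 _ => Finset.prod_ne_zero_iff.2 fun l2 _ => ?_
    exact_mod_cast (Nat.factorial_pos _).ne'
  have hRHS : ∏ i ∈ Finset.range k1, ∏ j ∈ Finset.range k2,
      ∏ l1 ∈ Finset.range (2 ^ i), ∏ l2 ∈ Finset.range (2 ^ j),
        hgPmf (windowCount k1 k2 n (i + 1) (2 * l1) j l2)
          (windowCount k1 k2 n i l1 (j + 1) (2 * l2))
          (windowCount k1 k2 n i l1 j l2)
          (windowCount k1 k2 n (i + 1) (2 * l1) (j + 1) (2 * l2)) =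
      (F k1 0 * F 0 k2) / (F 0 0 * F k1 k2) := by
    rw [← tele2 F hFne k1 k2]
    refine Finset.prod_congr rfl fun i hi => Finset.prod_congr rfl fun j hj => ?_
    exact level_prod k1 k2 n (Finset.mem_range.1 hi) (Finset.mem_range.1 hj)
  rw [hRHS]
  -- boundary identifications
  have hcell : ∀ l1 l2, windowCount k1 k2 n k1 l1 k2 l2 = n l1 l2 := by
    intro l1 l2
    simp only [windowCount, Nat.sub_self, pow_zero, mul_one, Nat.Ico_succ_singleton,
      Finset.sum_singleton]
  have hrow : ∀ l1, windowCount k1 k2 n k1 l1 0 0 = ∑ b ∈ Finset.range (2 ^ k2), n l1 b := by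
    intro l1
    simp only [windowCount, Nat.sub_self, pow_zero, mul_one, Nat.Ico_succ_singleton,
      Finset.sum_singleton, Nat.sub_zero, zero_mul, zero_add, one_mul, ← Finset.range_eq_Ico]
  have hcol : ∀ l2, windowCount k1 k2 n 0 0 k2 l2 = ∑ a ∈ Finset.range (2 ^ k1), n a l2 := by
    intro l2
    simp only [windowCount, Nat.sub_self, pow_zero, mul_one, Nat.Ico_succ_singleton,
      Finset.sum_singleton, Nat.sub_zero, zero_mul, zero_add, one_mul, ← Finset.range_eq_Ico]
  have htot : windowCount k1 k2 n 0 0 0 0 =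
      ∑ a ∈ Finset.range (2 ^ k1), ∑ b ∈ Finset.range (2 ^ k2), n a b := by
    simp only [windowCount, Nat.sub_zero, zero_mul, zero_add, one_mul, ← Finset.range_eq_Ico]
  have hFk10 : F k1 0 = ∏ l1 ∈ Finset.range (2 ^ k1),
      ((∑ b ∈ Finset.range (2 ^ k2), n l1 b).factorial : ℝ) := by
    simp only [hF, pow_zero, Finset.prod_range_one, hrow]
  have hF0k2 : F 0 k2 = ∏ l2 ∈ Finset.range (2 ^ k2),
      ((∑ a ∈ Finset.range (2 ^ k1), n a l2).factorial : ℝ) := by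
    simp only [hF, pow_zero, Finset.prod_range_one, hcol]
  have hF00 : F 0 0 = ((∑ a ∈ Finset.range (2 ^ k1), ∑ b ∈ Finset.range (2 ^ k2),
      n a b).factorial : ℝ) := by
    simp only [hF, pow_zero, Finset.prod_range_one, htot]
  have hFk1k2 : F k1 k2 = ∏ l1 ∈ Finset.range (2 ^ k1), ∏ l2 ∈ Finset.range (2 ^ k2),
      ((n l1 l2).factorial : ℝ) := by
    simp only [hF, hcell]
  rw [hFk10, hF0k2, hF00, hFk1k2]
end

section
/- Let π_{i,j} > 0 be cell probabilities of an I×J table. If for a set of positive reals the three pairwise local-independence conditions π_{i,j}π_{i+1,j+1} = π_{i,j+1}π_{i+1,j} hold for all adjacent 2×2 subtables (all local odds ratios equal 1), then for all pairs of row index sets and column index sets obtained as unions of consecutive indices, the corresponding aggregated 2×2 table also has odds ratio 1: [Σ_{i∈R1, j∈C1} π_{i,j}]·[Σ_{i∈R2, j∈C2} π_{i,j}] = [Σ_{i∈R1, j∈C2} π_{i,j}]·[Σ_{i∈R2, j∈C1} π_{i,j}], where R1, R2 partition consecutive row ranges and C1, C2 partition consecutive column ranges. -/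
/-- If all local odds ratios of a positive I×J table equal 1
(π_{i,j}π_{i+1,j+1} = π_{i,j+1}π_{i+1,j} for all adjacent 2×2 subtables), then
for any partition of consecutive row blocks R1 = {r,...,r+s}, R2 = {r+s+1,...,r+t}
and consecutive column blocks C1 = {c,...,c+u}, C2 = {c+u+1,...,c+v}, the
aggregated 2×2 table also has odds ratio 1. -/
theorem local_independence_aggregates
    (I J : ℕ) (π : ℕ → ℕ → ℝ)
    (hpos : ∀ i < I, ∀ j < J, 0 < π i j)
    (hloc : ∀ i, i + 1 < I → ∀ j, j + 1 < J →
        π i j * π (i + 1) (j + 1) = π i (j + 1) * π (i + 1) j)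
    (r s t c u v : ℕ) (hst : s < t) (huv : u < v)
    (hrI : r + t < I) (hcJ : c + v < J) :
    (∑ i ∈ Finset.Icc r (r + s), ∑ j ∈ Finset.Icc c (c + u), π i j) *
      (∑ i ∈ Finset.Icc (r + s + 1) (r + t), ∑ j ∈ Finset.Icc (c + u + 1) (c + v), π i j) =
    (∑ i ∈ Finset.Icc r (r + s), ∑ j ∈ Finset.Icc (c + u + 1) (c + v), π i j) *
      (∑ i ∈ Finset.Icc (r + s + 1) (r + t), ∑ j ∈ Finset.Icc c (c + u), π i j) := by
  -- Step 1: adjacent rows, arbitrary columns (j ≤ j')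
  have rowle : ∀ i, i + 1 < I → ∀ j, j < J → ∀ j', j ≤ j' → j' < J →
      π i j * π (i + 1) j' = π i j' * π (i + 1) j := by
    intro i hi j hj j' hjj' hj'
    induction j', hjj' using Nat.le_induction with
    | base => ring
    | succ k hk ih =>
      have hkJ : k < J := by omega
      have ih' := ih hkJ
      have hl := hloc i hi k hj'
      have h1 : π i k ≠ 0 := ne_of_gt (hpos i (by omega) k hkJ)
      have h2 : π (i + 1) k ≠ 0 := ne_of_gt (hpos (i + 1) hi k hkJ)
      have h : (π i j * π (i + 1) (k + 1)) * (π i k * π (i + 1) k) =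
          (π i (k + 1) * π (i + 1) j) * (π i k * π (i + 1) k) := by
        linear_combination (π (i + 1) (k + 1) * π i k) * ih' +
          (π (i + 1) j * π i k) * hl
      exact mul_right_cancel₀ (mul_ne_zero h1 h2) h
  -- adjacent rows, arbitrary columns
  have row : ∀ i, i + 1 < I → ∀ j, j < J → ∀ j', j' < J →
      π i j * π (i + 1) j' = π i j' * π (i + 1) j := by
    intro i hi j hj j' hj'
    rcases le_total j j' with h | h
    · exact rowle i hi j hj j' h hj'
    · have := rowle i hi j' hj' j h hj
      linarith
  -- Step 2: arbitrary rows (i ≤ i')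
  have crossle : ∀ i, i < I → ∀ j, j < J → ∀ j', j' < J → ∀ i', i ≤ i' → i' < I →
      π i j * π i' j' = π i j' * π i' j := by
    intro i hi j hj j' hj' i' hii' hi'
    induction i', hii' using Nat.le_induction with
    | base => ring
    | succ k hk ih =>
      have hkI : k < I := by omega
      have ih' := ih hkI
      have hr := row k hi' j hj j' hj'
      have h1 : π k j ≠ 0 := ne_of_gt (hpos k hkI j hj)
      have h2 : π k j' ≠ 0 := ne_of_gt (hpos k hkI j' hj')
      have h : (π i j * π (k + 1) j') * (π k j * π k j') =
          (π i j' * π (k + 1) j) * (π k j * π k j') := by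
        linear_combination (π (k + 1) j' * π k j) * ih' +
          (π i j' * π k j) * hr
      exact mul_right_cancel₀ (mul_ne_zero h1 h2) h
  have key : ∀ i ∈ Finset.Icc r (r + s), ∀ i' ∈ Finset.Icc (r + s + 1) (r + t),
      ∀ j ∈ Finset.Icc c (c + u), ∀ j' ∈ Finset.Icc (c + u + 1) (c + v),
      π i j * π i' j' = π i j' * π i' j := by
    intro i hi i' hi' j hj j' hj'
    simp only [Finset.mem_Icc] at hi hi' hj hj'
    exact crossle i (by omega) j (by omega) j' (by omega) i' (by omega) (by omega)
  rw [Finset.sum_mul_sum, Finset.sum_mul_sum]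
  refine Finset.sum_congr rfl ?_
  intro i hi
  refine Finset.sum_congr rfl ?_
  intro i' hi'
  rw [Finset.sum_mul_sum, Finset.sum_mul_sum, Finset.sum_comm]
  refine Finset.sum_congr rfl fun j' hj' => Finset.sum_congr rfl fun j hj => ?_
  exact key i hi i' hi' j hj j' hj'
end
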